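/- Let ε ≥ 0 and m, r ∈ ℕ with r ≤ m. Let M be a mechanism assigning to each s ∈ {−1,+1}^m a probability measure M(s) on Ω, satisfying (ε,0)-DP: for all s, s′ differing in exactly one coordinate and every measurable A, M(s)(A) ≤ e^ε·M(s′)(A). Let S be uniform on {−1,+1}^m, ω ~ M(S), and let Ŝ : Ω → {−1,0,+1}^m be a measurable guessing rule that almost surely makes exactly r nonzero guesses, with W = Σ_{i=1}^m max{0, Ŝ(ω)_i · S_i}. Then for every t > 0, Pr[W ≥ r·e^ε/(e^ε+1) + t] ≤ exp(−2t²/r). -/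

import Mathlib

open MeasureTheory Real
open scoped ENNReal

/-- The ±1 sign encoded by a Boolean membership bit (true = +1, false = −1). -/
def signOf (b : Bool) : ℤ := if b then 1 else -1

lemma hoef_scalar (p : ℝ) (hp0 : 0 ≤ p) (hp1 : p ≤ 1) (x : ℝ) (hx : 0 ≤ x) :
    1 - p + p * Real.exp x ≤ Real.exp (p * x + x ^ 2 / 8) := by
  have hD : ∀ y : ℝ, 0 < 1 - p + p * Real.exp y := by
    intro y
    rcases eq_or_lt_of_le hp0 with h | h
    · simp [← h]
    · have : 0 < p * Real.exp y := mul_pos h (Real.exp_pos y)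
      nlinarith
  -- f y = p*y + y^2/8 - log (D y), show f x ≥ 0
  set f : ℝ → ℝ := fun y => p * y + y ^ 2 / 8 - Real.log (1 - p + p * Real.exp y) with hf
  set g : ℝ → ℝ := fun y => p + y / 4 - p * Real.exp y / (1 - p + p * Real.exp y) with hg
  have hfd : ∀ y, HasDerivAt f (g y) y := by
    intro y
    have hD' : HasDerivAt (fun y => 1 - p + p * Real.exp y) (p * Real.exp y) y := by
      simpa using ((Real.hasDerivAt_exp y).const_mul p).const_add (1 - p)
    have hlog : HasDerivAt (fun y => Real.log (1 - p + p * Real.exp y))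
        (p * Real.exp y / (1 - p + p * Real.exp y)) y := hD'.log (hD y).ne'
    have h1 : HasDerivAt (fun y => p * y + y ^ 2 / 8) (p + y / 4) y := by
      have := ((hasDerivAt_pow 2 y).div_const 8).const_add 0
      have h2 : HasDerivAt (fun y : ℝ => p * y) p y := by
        simpa using (hasDerivAt_id y).const_mul p
      have h3 : HasDerivAt (fun y : ℝ => y ^ 2 / 8) (y / 4) y := by
        have := (hasDerivAt_pow 2 y).div_const 8
        exact this.congr_deriv (by rw [show (2:ℕ) - 1 = 1 from rfl]; push_cast; ring)
      exact h2.add h3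
    exact h1.sub hlog
  have hgd : ∀ y, HasDerivAt g
      (1 / 4 - (p * Real.exp y / (1 - p + p * Real.exp y)
        - (p * Real.exp y / (1 - p + p * Real.exp y)) ^ 2)) y := by
    intro y
    have hD' : HasDerivAt (fun y => 1 - p + p * Real.exp y) (p * Real.exp y) y := by
      simpa using ((Real.hasDerivAt_exp y).const_mul p).const_add (1 - p)
    have hnum : HasDerivAt (fun y => p * Real.exp y) (p * Real.exp y) y :=
      (Real.hasDerivAt_exp y).const_mul p
    have hdiv : HasDerivAt (fun y => p * Real.exp y / (1 - p + p * Real.exp y))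
        ((p * Real.exp y * (1 - p + p * Real.exp y) - p * Real.exp y * (p * Real.exp y))
          / (1 - p + p * Real.exp y) ^ 2) y := hnum.div hD' (hD y).ne'
    have hlin : HasDerivAt (fun y : ℝ => p + y / 4) (1 / 4) y := by
      simpa using ((hasDerivAt_id y).div_const 4).const_add p
    have := hlin.sub hdiv
    refine this.congr_deriv ?_
    have h := (hD y).ne'
    field_simp
  -- g is monotone since its derivative is (u-1/2)^2 ≥ 0
  have hgmono : Monotone g := by
    apply monotone_of_deriv_nonneg
    · exact fun y => (hgd y).differentiableAt
    · intro y
      rw [(hgd y).deriv]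
      set u := p * Real.exp y / (1 - p + p * Real.exp y)
      nlinarith [sq_nonneg (u - 1/2)]
  have hg0 : g 0 = 0 := by simp [hg]
  have hgnn : ∀ y, 0 ≤ y → 0 ≤ g y := fun y hy => hg0 ▸ hgmono hy
  have hf0 : f 0 = 0 := by simp [hf]
  have hfnn : 0 ≤ f x := by
    have hmono : MonotoneOn f (Set.Ici (0:ℝ)) := by
      apply monotoneOn_of_deriv_nonneg (convex_Ici 0)
      · exact Continuous.continuousOn (by
          fun_prop (disch := intro y; exact (hD y).ne'))
      · intro y hy
        exact (hfd y).differentiableAt.differentiableWithinAt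
      · intro y hy
        rw [(hfd y).deriv]
        exact hgnn y (le_of_lt (by simpa using hy))
    have := hmono (Set.self_mem_Ici) (Set.mem_Ici.mpr hx) hx
    linarith [hf0 ▸ this]
  have : Real.log (1 - p + p * Real.exp x) ≤ p * x + x ^ 2 / 8 := by
    simp only [hf] at hfnn; linarith
  calc 1 - p + p * Real.exp x = Real.exp (Real.log (1 - p + p * Real.exp x)) :=
        (Real.exp_log (hD x)).symm
    _ ≤ Real.exp (p * x + x ^ 2 / 8) := Real.exp_le_exp.mpr this

/-- for an (ε,0)-DP mechanism M on membership vectors S ∈ {−1,+1}^m with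
i.i.d. fair-sign coordinates and a measurable guessing rule with values in {−1,0,+1}^m
making exactly r nonzero guesses a.s., the number of correct guesses W satisfies the
Hoeffding-type bound Pr[W ≥ r·e^ε/(e^ε+1) + t] ≤ exp(−2t²/r) for every t > 0. -/
theorem o1_audit_hoeffding
    {Ω : Type*} [MeasurableSpace Ω]
    (ε : ℝ) (hε : 0 ≤ ε) (m r : ℕ) (hrm : r ≤ m)
    (M : (Fin m → Bool) → Measure Ω)
    (hMprob : ∀ s, IsProbabilityMeasure (M s))
    (hDP : ∀ s s' : Fin m → Bool,
      (Finset.univ.filter (fun i => s i ≠ s' i)).card = 1 →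
      ∀ A : Set Ω, MeasurableSet A →
        M s A ≤ ENNReal.ofReal (Real.exp ε) * M s' A)
    (P : Measure ((Fin m → Bool) × Ω))
    (hP : P = ∑ s : Fin m → Bool,
      ((2 : ℝ≥0∞) ^ m)⁻¹ • (M s).map (fun ω => (s, ω)))
    (Sg : Ω → Fin m → ℤ) (hSg : Measurable Sg)
    (hvals : ∀ ω i, Sg ω i = -1 ∨ Sg ω i = 0 ∨ Sg ω i = 1)
    (hguesses : ∀ᵐ q ∂P, (Finset.univ.filter (fun i => Sg q.2 i ≠ 0)).card = r)
    (t : ℝ) (ht : 0 < t) :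
    P {q : (Fin m → Bool) × Ω |
        (r : ℝ) * (Real.exp ε / (Real.exp ε + 1)) + t ≤
          ((∑ i, max 0 (Sg q.2 i * signOf (q.1 i)) : ℤ) : ℝ)} ≤
      ENNReal.ofReal (Real.exp (-2 * t ^ 2 / r)) := by
  classical
  have hE1 : (0:ℝ) < Real.exp ε + 1 := by positivity
  set p : ℝ := Real.exp ε / (Real.exp ε + 1) with hpdef
  have hp0 : 0 ≤ p := by positivity
  have hp1 : p ≤ 1 := by rw [hpdef, div_le_one hE1]; linarith
  have hq : 1 - p = 1 / (Real.exp ε + 1) := by rw [hpdef]; field_simp; ring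
  -- P is a probability measure
  have hPuniv : P Set.univ = 1 := by
    rw [hP, Measure.finset_sum_apply]
    simp only [Measure.smul_apply, smul_eq_mul]
    have : ∀ s : Fin m → Bool, ((M s).map (fun ω => (s, ω))) Set.univ = 1 := by
      intro s
      have := hMprob s
      rw [Measure.map_apply (measurable_prodMk_left) MeasurableSet.univ]
      simp
    simp only [this, mul_one, Finset.sum_const, Finset.card_univ]
    rw [Fintype.card_fun]
    simp only [Fintype.card_fin, Fintype.card_bool, nsmul_eq_mul]
    push_cast
    rw [ENNReal.mul_inv_cancel (by positivity) (by simp)]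
  rcases Nat.eq_zero_or_pos r with hr0 | hrpos
  · subst hr0
    simp only [Nat.cast_zero, div_zero, Real.exp_zero, ENNReal.ofReal_one]
    exact le_trans (measure_mono (Set.subset_univ _)) (le_of_eq hPuniv)
  have hrR : (0:ℝ) < r := by exact_mod_cast hrpos
  set L : ℝ := 4 * t / r with hLdef
  have hL : 0 < L := by positivity
  set D : ℝ := 1 - p + p * Real.exp L with hDdef
  have hexpL : 1 ≤ Real.exp L := Real.one_le_exp hL.le
  have hD1 : 1 ≤ D := by nlinarith
  have hD0 : 0 < D := lt_of_lt_of_le one_pos hD1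
  set c : ℝ≥0∞ := ENNReal.ofReal (Real.exp L - 1) with hcdef
  have hoc : ENNReal.ofReal (Real.exp L) = 1 + c := by
    rw [hcdef, ← ENNReal.ofReal_one, ← ENNReal.ofReal_add (by norm_num) (by linarith)]
    norm_num
  have hoD : ENNReal.ofReal D = 1 + ENNReal.ofReal p * c := by
    rw [hcdef, ← ENNReal.ofReal_mul hp0, ← ENNReal.ofReal_one,
      ← ENNReal.ofReal_add (by norm_num) (by nlinarith)]
    rw [hDdef]; ring_nf
  set φ : (Fin m → Bool) → Fin m → Ω → ℝ≥0∞ :=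
    fun s i ω => if Sg ω i = signOf (s i) then ENNReal.ofReal (Real.exp L) else 1 with hphidef
  set ψ : Fin m → Ω → ℝ≥0∞ :=
    fun i ω => if Sg ω i ≠ 0 then ENNReal.ofReal D else 1 with hpsidef
  have hmSg : ∀ i : Fin m, Measurable (fun ω => Sg ω i) :=
    fun i => (measurable_pi_apply i).comp hSg
  have hmφ : ∀ s i, Measurable (φ s i) := fun s i =>
    (measurable_of_countable
      (fun z : ℤ => if z = signOf (s i) then ENNReal.ofReal (Real.exp L) else 1)).comp (hmSg i)
  have hmψ : ∀ i, Measurable (ψ i) := fun i =>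
    (measurable_of_countable (fun z : ℤ => if z ≠ 0 then ENNReal.ofReal D else 1)).comp (hmSg i)
  have hmax : ∀ (s : Fin m → Bool) (ω : Ω) (i : Fin m),
      (max 0 (Sg ω i * signOf (s i)) : ℤ) = if Sg ω i = signOf (s i) then 1 else 0 := by
    intro s ω i
    rcases hvals ω i with h | h | h <;> cases hb : s i <;> simp [h, signOf, hb]
  have hfφ : ∀ (s : Fin m → Bool) (ω : Ω),
      ENNReal.ofReal (Real.exp (L * ((∑ i, max 0 (Sg ω i * signOf (s i)) : ℤ) : ℝ)))
        = ∏ i, φ s i ω := by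
    intro s ω
    have hsum : (∑ i, max 0 (Sg ω i * signOf (s i)) : ℤ)
        = ∑ i, if Sg ω i = signOf (s i) then 1 else 0 :=
      Finset.sum_congr rfl fun i _ => hmax s ω i
    rw [hsum]
    push_cast
    rw [Finset.mul_sum, Real.exp_sum,
      ENNReal.ofReal_prod_of_nonneg (fun i _ => (Real.exp_pos _).le)]
    refine Finset.prod_congr rfl fun i _ => ?_
    by_cases h : Sg ω i = signOf (s i) <;>
      simp [hphidef, h, apply_ite (fun z : ℤ => (z : ℝ))]
  -- DP at the level of lintegrals
  have hDPle : ∀ s s' : Fin m → Bool,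
      (Finset.univ.filter (fun i => s i ≠ s' i)).card = 1 →
      ∀ g : Ω → ℝ≥0∞,
        ∫⁻ ω, g ω ∂(M s) ≤ ENNReal.ofReal (Real.exp ε) * ∫⁻ ω, g ω ∂(M s') := by
    intro s s' hcard g
    have hle : M s ≤ (ENNReal.ofReal (Real.exp ε)) • M s' := by
      rw [Measure.le_iff]
      intro A hA
      rw [Measure.smul_apply, smul_eq_mul]
      exact hDP s s' hcard A hA
    calc ∫⁻ ω, g ω ∂(M s) ≤ ∫⁻ ω, g ω ∂((ENNReal.ofReal (Real.exp ε)) • M s') :=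
          lintegral_mono' hle le_rfl
      _ = _ := lintegral_smul_measure _ _
  -- flipping one coordinate
  set flip : Fin m → (Fin m → Bool) → (Fin m → Bool) :=
    fun a s => Function.update s a (!(s a)) with hflipdef
  have hflipat : ∀ a s, flip a s a = !(s a) := by intro a s; simp [hflipdef]
  have hflipne : ∀ a s j, j ≠ a → flip a s j = s j := by
    intro a s j hj; simp [hflipdef, Function.update_of_ne hj]
  have hflipflip : ∀ a s, flip a (flip a s) = s := by
    intro a s; funext j
    by_cases hj : j = a
    · subst hj; simp [hflipdef]
    · rw [hflipne a _ j hj, hflipne a s j hj]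
  have hflipcard : ∀ a s, (Finset.univ.filter (fun j => s j ≠ flip a s j)).card = 1 := by
    intro a s
    have : (Finset.univ.filter (fun j => s j ≠ flip a s j)) = {a} := by
      ext j
      by_cases hj : j = a
      · subst hj; simp [hflipat]
      · simp [hj, hflipne a s j hj]
    rw [this, Finset.card_singleton]
  -- the correctness / nonzero-guess sets
  set Ag : (Fin m → Bool) → Fin m → Set Ω := fun s i => {ω | Sg ω i = signOf (s i)} with hAgdef
  set Bg : Fin m → Set Ω := fun i => {ω | Sg ω i ≠ 0} with hBgdef
  have hmA : ∀ s i, MeasurableSet (Ag s i) := fun s i => (hmSg i) (measurableSet_singleton _)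
  have hmB : ∀ i, MeasurableSet (Bg i) := fun i => ((hmSg i) (measurableSet_singleton 0)).compl
  have hφint : ∀ (s : Fin m → Bool) (a : Fin m) (h : Ω → ℝ≥0∞), Measurable h →
      ∀ μ : Measure Ω,
      ∫⁻ ω, φ s a ω * h ω ∂μ = (∫⁻ ω, h ω ∂μ) + c * ∫⁻ ω in Ag s a, h ω ∂μ := by
    intro s a h hh μ
    have heq : ∀ ω, φ s a ω * h ω = h ω + c * (Ag s a).indicator h ω := by
      intro ω
      by_cases hω : Sg ω a = signOf (s a)
      · have hm : ω ∈ Ag s a := hω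
        simp [hphidef, hω, Set.indicator_of_mem hm, hoc, add_mul]
      · have hm : ω ∉ Ag s a := hω
        simp [hphidef, hω, Set.indicator_of_notMem hm]
    simp_rw [heq]
    rw [lintegral_add_left hh, lintegral_const_mul c (hh.indicator (hmA s a)),
      lintegral_indicator (hmA s a) _]
  have hψint : ∀ (a : Fin m) (h : Ω → ℝ≥0∞), Measurable h → ∀ μ : Measure Ω,
      ∫⁻ ω, ψ a ω * h ω ∂μ
        = (∫⁻ ω, h ω ∂μ) + (ENNReal.ofReal p * c) * ∫⁻ ω in Bg a, h ω ∂μ := by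
    intro a h hh μ
    have heq : ∀ ω, ψ a ω * h ω = h ω + (ENNReal.ofReal p * c) * (Bg a).indicator h ω := by
      intro ω
      by_cases hω : Sg ω a = 0
      · have hm : ω ∉ Bg a := by simp [hBgdef, hω]
        simp [hpsidef, hω, Set.indicator_of_notMem hm]
      · have hm : ω ∈ Bg a := hω
        simp [hpsidef, hω, Set.indicator_of_mem hm, hoD, add_mul]
    simp_rw [heq]
    rw [lintegral_add_left hh, lintegral_const_mul _ (hh.indicator (hmB a)),
      lintegral_indicator (hmB a) _]
  have hABunion : ∀ a s, Ag s a ∪ Ag (flip a s) a = Bg a := by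
    intro a s
    ext ω
    rcases hvals ω a with h | h | h <;> cases hb : s a <;>
      simp [hAgdef, hBgdef, h, hflipat, hb, signOf]
  have hABdisj : ∀ a s, Disjoint (Ag s a) (Ag (flip a s) a) := by
    intro a s
    rw [Set.disjoint_left]
    intro ω h1 h2
    have e1 : Sg ω a = signOf (s a) := h1
    have e2 : Sg ω a = signOf ((flip a s) a) := h2
    rw [hflipat] at e2
    cases hb : s a <;> rw [hb] at e1 e2 <;> simp [signOf] at e1 e2 <;> omega
  have hkey : ∀ X Y : ℝ≥0∞, X ≤ ENNReal.ofReal (Real.exp ε) * Y →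
      X ≤ ENNReal.ofReal p * X + ENNReal.ofReal p * Y := by
    intro X Y hXY
    have h1 : ENNReal.ofReal p + ENNReal.ofReal (1 - p) = 1 := by
      rw [← ENNReal.ofReal_add hp0 (by linarith), ← ENNReal.ofReal_one]
      norm_num
    have h2 : ENNReal.ofReal (1 - p) * X ≤ ENNReal.ofReal p * Y := by
      calc ENNReal.ofReal (1 - p) * X
          ≤ ENNReal.ofReal (1 - p) * (ENNReal.ofReal (Real.exp ε) * Y) :=
            mul_le_mul_right hXY _
        _ = ENNReal.ofReal ((1 - p) * Real.exp ε) * Y := by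
            rw [ENNReal.ofReal_mul (by linarith), mul_assoc]
        _ = ENNReal.ofReal p * Y := by
            congr 1
            rw [hq, hpdef]
            field_simp
    calc X = (ENNReal.ofReal p + ENNReal.ofReal (1 - p)) * X := by rw [h1, one_mul]
      _ = ENNReal.ofReal p * X + ENNReal.ofReal (1 - p) * X := add_mul _ _ _
      _ ≤ ENNReal.ofReal p * X + ENNReal.ofReal p * Y := add_le_add_right h2 _
  have hpair : ∀ (a : Fin m) (s : Fin m → Bool) (h : Ω → ℝ≥0∞), Measurable h →
      (∫⁻ ω, φ s a ω * h ω ∂(M s)) + (∫⁻ ω, φ (flip a s) a ω * h ω ∂(M (flip a s)))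
        ≤ (∫⁻ ω, ψ a ω * h ω ∂(M s)) + (∫⁻ ω, ψ a ω * h ω ∂(M (flip a s))) := by
    intro a s h hh
    rw [hφint s a h hh (M s), hφint (flip a s) a h hh (M (flip a s)),
      hψint a h hh (M s), hψint a h hh (M (flip a s))]
    set X1 := ∫⁻ ω in Ag s a, h ω ∂(M s) with hX1
    set X2 := ∫⁻ ω in Ag s a, h ω ∂(M (flip a s)) with hX2
    set Y1 := ∫⁻ ω in Ag (flip a s) a, h ω ∂(M s) with hY1
    set Y2 := ∫⁻ ω in Ag (flip a s) a, h ω ∂(M (flip a s)) with hY2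
    have hsplit1 : ∫⁻ ω in Bg a, h ω ∂(M s) = X1 + Y1 := by
      rw [hX1, hY1, ← hABunion a s, lintegral_union (hmA (flip a s) a) (hABdisj a s)]
    have hsplit2 : ∫⁻ ω in Bg a, h ω ∂(M (flip a s)) = X2 + Y2 := by
      rw [hX2, hY2, ← hABunion a s, lintegral_union (hmA (flip a s) a) (hABdisj a s)]
    have d1 : X1 ≤ ENNReal.ofReal (Real.exp ε) * X2 := by
      have := hDPle s (flip a s) (hflipcard a s) ((Ag s a).indicator h)
      rwa [lintegral_indicator (hmA s a) _, lintegral_indicator (hmA s a) _] at this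
    have d2 : Y2 ≤ ENNReal.ofReal (Real.exp ε) * Y1 := by
      have hc : (Finset.univ.filter (fun j => (flip a s) j ≠ s j)).card = 1 := by
        have h' := hflipcard a (flip a s)
        rwa [hflipflip] at h'
      have := hDPle (flip a s) s hc ((Ag (flip a s) a).indicator h)
      rwa [lintegral_indicator (hmA (flip a s) a) _,
        lintegral_indicator (hmA (flip a s) a) _] at this
    have k1 := hkey _ _ d1
    have k2 := hkey _ _ d2
    rw [hsplit1, hsplit2]
    have hc1 : c * X1 + c * Y2
        ≤ (ENNReal.ofReal p * c) * (X1 + Y1) + (ENNReal.ofReal p * c) * (X2 + Y2) := by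
      calc c * X1 + c * Y2
          ≤ c * (ENNReal.ofReal p * X1 + ENNReal.ofReal p * X2)
            + c * (ENNReal.ofReal p * Y2 + ENNReal.ofReal p * Y1) :=
            add_le_add (mul_le_mul_right k1 c) (mul_le_mul_right k2 c)
        _ = (ENNReal.ofReal p * c) * (X1 + Y1) + (ENNReal.ofReal p * c) * (X2 + Y2) := by
            ring
    calc (∫⁻ ω, h ω ∂(M s)) + c * X1 + ((∫⁻ ω, h ω ∂(M (flip a s))) + c * Y2)
        = ((∫⁻ ω, h ω ∂(M s)) + (∫⁻ ω, h ω ∂(M (flip a s)))) + (c * X1 + c * Y2) := by ring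
      _ ≤ ((∫⁻ ω, h ω ∂(M s)) + (∫⁻ ω, h ω ∂(M (flip a s))))
          + ((ENNReal.ofReal p * c) * (X1 + Y1) + (ENNReal.ofReal p * c) * (X2 + Y2)) :=
          add_le_add_right hc1 _
      _ = (∫⁻ ω, h ω ∂(M s)) + (ENNReal.ofReal p * c) * (X1 + Y1)
          + ((∫⁻ ω, h ω ∂(M (flip a s))) + (ENNReal.ofReal p * c) * (X2 + Y2)) := by ring
  -- one coordinate replacement over the whole sum
  have hstep : ∀ (a : Fin m) (H : (Fin m → Bool) → Ω → ℝ≥0∞),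
      (∀ s, Measurable (H s)) → (∀ s, H (flip a s) = H s) →
      ∑ s : Fin m → Bool, ∫⁻ ω, φ s a ω * H s ω ∂(M s)
        ≤ ∑ s : Fin m → Bool, ∫⁻ ω, ψ a ω * H s ω ∂(M s) := by
    intro a H hHm hHinv
    set F : (Fin m → Bool) → ℝ≥0∞ := fun s => ∫⁻ ω, φ s a ω * H s ω ∂(M s) with hF
    set G : (Fin m → Bool) → ℝ≥0∞ := fun s => ∫⁻ ω, ψ a ω * H s ω ∂(M s) with hG
    have hbij : Function.Bijective (flip a) :=
      Function.Involutive.bijective (fun s => hflipflip a s)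
    have hFsum : ∑ s : Fin m → Bool, F (flip a s) = ∑ s : Fin m → Bool, F s :=
      Fintype.sum_bijective _ hbij _ _ (fun s => rfl)
    have hGsum : ∑ s : Fin m → Bool, G (flip a s) = ∑ s : Fin m → Bool, G s :=
      Fintype.sum_bijective _ hbij _ _ (fun s => rfl)
    have hps : ∀ s, F s + F (flip a s) ≤ G s + G (flip a s) := by
      intro s
      have h' := hpair a s (H s) (hHm s)
      simpa [hF, hG, hHinv s] using h'
    have h2 : (2:ℝ≥0∞) * ∑ s : Fin m → Bool, F s ≤ 2 * ∑ s : Fin m → Bool, G s := by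
      calc (2:ℝ≥0∞) * ∑ s : Fin m → Bool, F s
          = (∑ s : Fin m → Bool, F s) + ∑ s : Fin m → Bool, F (flip a s) := by
            rw [hFsum]; ring
        _ = ∑ s : Fin m → Bool, (F s + F (flip a s)) := Finset.sum_add_distrib.symm
        _ ≤ ∑ s : Fin m → Bool, (G s + G (flip a s)) :=
            Finset.sum_le_sum (fun s _ => hps s)
        _ = (∑ s : Fin m → Bool, G s) + ∑ s : Fin m → Bool, G (flip a s) :=
            Finset.sum_add_distrib
        _ = 2 * ∑ s : Fin m → Bool, G s := by rw [hGsum]; ring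
    exact (ENNReal.mul_le_mul_iff_right (by norm_num) (by norm_num)).mp h2
  -- main induction over the coordinates
  have hmain : ∀ T : Finset (Fin m),
      ∑ s : Fin m → Bool, ∫⁻ ω, (∏ i ∈ T, φ s i ω) * (∏ i ∈ Tᶜ, ψ i ω) ∂(M s)
        ≤ ∑ s : Fin m → Bool, ∫⁻ ω, ∏ i, ψ i ω ∂(M s) := by
    intro T
    induction T using Finset.induction_on with
    | empty => simp
    | @insert a T' ha IH =>
      have haT : a ∈ T'ᶜ := Finset.mem_compl.mpr ha
      have e1 : ∀ (s : Fin m → Bool) (ω : Ω),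
          (∏ i ∈ insert a T', φ s i ω) * (∏ i ∈ (insert a T')ᶜ, ψ i ω)
            = φ s a ω * ((∏ i ∈ T', φ s i ω) * (∏ i ∈ (insert a T')ᶜ, ψ i ω)) := by
        intro s ω; rw [Finset.prod_insert ha, mul_assoc]
      have e2 : ∀ (s : Fin m → Bool) (ω : Ω),
          ψ a ω * ((∏ i ∈ T', φ s i ω) * (∏ i ∈ (insert a T')ᶜ, ψ i ω))
            = (∏ i ∈ T', φ s i ω) * (∏ i ∈ T'ᶜ, ψ i ω) := by
        intro s ω
        rw [← Finset.mul_prod_erase _ _ haT, Finset.compl_insert]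
        ring
      have hmH : ∀ s : Fin m → Bool,
          Measurable (fun ω => (∏ i ∈ T', φ s i ω) * (∏ i ∈ (insert a T')ᶜ, ψ i ω)) := by
        intro s
        exact (Finset.measurable_prod _ (fun i _ => hmφ s i)).mul
          (Finset.measurable_prod _ (fun i _ => hmψ i))
      have hinv : ∀ s : Fin m → Bool,
          (fun ω => (∏ i ∈ T', φ (flip a s) i ω) * (∏ i ∈ (insert a T')ᶜ, ψ i ω))
            = fun ω => (∏ i ∈ T', φ s i ω) * (∏ i ∈ (insert a T')ᶜ, ψ i ω) := by
        intro s
        funext ω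
        congr 1
        refine Finset.prod_congr rfl fun i hi => ?_
        have hia : i ≠ a := fun h => ha (h ▸ hi)
        rw [hphidef]
        simp only [hflipne a s i hia]
      calc ∑ s : Fin m → Bool,
            ∫⁻ ω, (∏ i ∈ insert a T', φ s i ω) * (∏ i ∈ (insert a T')ᶜ, ψ i ω) ∂(M s)
          = ∑ s : Fin m → Bool,
            ∫⁻ ω, φ s a ω * ((∏ i ∈ T', φ s i ω) * (∏ i ∈ (insert a T')ᶜ, ψ i ω)) ∂(M s) := by
            refine Finset.sum_congr rfl fun s _ => ?_
            exact lintegral_congr fun ω => e1 s ω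
        _ ≤ ∑ s : Fin m → Bool,
            ∫⁻ ω, ψ a ω * ((∏ i ∈ T', φ s i ω) * (∏ i ∈ (insert a T')ᶜ, ψ i ω)) ∂(M s) :=
            hstep a _ hmH hinv
        _ = ∑ s : Fin m → Bool,
            ∫⁻ ω, (∏ i ∈ T', φ s i ω) * (∏ i ∈ T'ᶜ, ψ i ω) ∂(M s) := by
            refine Finset.sum_congr rfl fun s _ => ?_
            exact lintegral_congr fun ω => e2 s ω
        _ ≤ _ := IH
  -- a.s. exactly r nonzero guesses under each M s
  have hcardmeas : Measurable (fun ω : Ω => (Finset.univ.filter (fun i => Sg ω i ≠ 0)).card) := by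
    have heq : (fun ω : Ω => (Finset.univ.filter (fun i => Sg ω i ≠ 0)).card)
        = fun ω => ∑ i : Fin m, if Sg ω i ≠ 0 then 1 else 0 := by
      funext ω; rw [Finset.card_filter]
    rw [heq]
    exact Finset.measurable_sum _ (fun i _ =>
      (measurable_of_countable (fun z : ℤ => if z ≠ 0 then (1:ℕ) else 0)).comp (hmSg i))
  have hae : ∀ s : Fin m → Bool,
      ∀ᵐ ω ∂(M s), (Finset.univ.filter (fun i => Sg ω i ≠ 0)).card = r := by
    have hNmeas : MeasurableSet {q : (Fin m → Bool) × Ω |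
        ¬ (Finset.univ.filter (fun i => Sg q.2 i ≠ 0)).card = r} :=
      (((hcardmeas.comp measurable_snd) (measurableSet_singleton r)).compl)
    intro s
    rw [ae_iff]
    have hP0 := ae_iff.mp hguesses
    rw [hP, Measure.finset_sum_apply] at hP0
    have hterm := Finset.sum_eq_zero_iff.mp hP0 s (Finset.mem_univ s)
    rw [Measure.smul_apply, smul_eq_mul,
      Measure.map_apply measurable_prodMk_left hNmeas] at hterm
    have h2 : ((2:ℝ≥0∞)^m)⁻¹ ≠ 0 := by simp
    exact (mul_eq_zero.mp hterm).resolve_left h2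
  -- the ψ-product integrates to D^r
  have hpsiprod : ∀ s : Fin m → Bool,
      ∫⁻ ω, ∏ i, ψ i ω ∂(M s) = ENNReal.ofReal (D ^ r) := by
    intro s
    have hcong : ∫⁻ ω, ∏ i, ψ i ω ∂(M s) = ∫⁻ _, ENNReal.ofReal (D ^ r) ∂(M s) := by
      apply lintegral_congr_ae
      filter_upwards [hae s] with ω hω
      have hprod : ∏ i, ψ i ω
          = ENNReal.ofReal D ^ (Finset.univ.filter (fun i => Sg ω i ≠ 0)).card := by
        rw [← Finset.prod_filter_mul_prod_filter_not Finset.univ (fun i => Sg ω i ≠ 0)]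
        have h1 : ∏ i ∈ Finset.univ.filter (fun i => Sg ω i ≠ 0), ψ i ω
            = ∏ _i ∈ Finset.univ.filter (fun i => Sg ω i ≠ 0), ENNReal.ofReal D := by
          refine Finset.prod_congr rfl fun i hi => ?_
          rw [hpsidef]
          simp only [if_pos (Finset.mem_filter.mp hi).2]
        have h2 : ∏ i ∈ Finset.univ.filter (fun i => ¬ Sg ω i ≠ 0), ψ i ω = 1 := by
          refine Finset.prod_eq_one fun i hi => ?_
          rw [hpsidef]
          simp only [if_neg (Finset.mem_filter.mp hi).2]
        rw [h1, h2, Finset.prod_const, mul_one]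
      rw [hprod, hω, ENNReal.ofReal_pow hD0.le]
    rw [hcong, lintegral_const, (hMprob s).measure_univ, mul_one]
  -- the moment generating function of W under P
  set f : (Fin m → Bool) × Ω → ℝ≥0∞ := fun q =>
    ENNReal.ofReal (Real.exp (L * ((∑ i, max 0 (Sg q.2 i * signOf (q.1 i)) : ℤ) : ℝ))) with hfdef
  have hmsum : Measurable (fun q : (Fin m → Bool) × Ω =>
      (∑ i, max 0 (Sg q.2 i * signOf (q.1 i)) : ℤ)) := by
    refine Finset.measurable_sum _ fun i _ => ?_
    have : (fun q : (Fin m → Bool) × Ω => max 0 (Sg q.2 i * signOf (q.1 i)))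
        = (fun x : ℤ × Bool => max 0 (x.1 * signOf x.2)) ∘
          (fun q : (Fin m → Bool) × Ω => (Sg q.2 i, q.1 i)) := rfl
    rw [this]
    exact (measurable_of_countable _).comp
      (((hmSg i).comp measurable_snd).prodMk (measurable_fst.eval))
  have hmf : Measurable f := by
    apply ENNReal.measurable_ofReal.comp
    apply Real.measurable_exp.comp
    exact (((measurable_of_countable (fun z : ℤ => (z:ℝ))).comp hmsum).const_mul L)
  have hPint : ∫⁻ q, f q ∂P
      = ((2:ℝ≥0∞)^m)⁻¹ * ∑ s : Fin m → Bool, ∫⁻ ω, f (s, ω) ∂(M s) := by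
    rw [hP, lintegral_finset_sum_measure]
    simp_rw [lintegral_smul_measure, smul_eq_mul, lintegral_map hmf measurable_prodMk_left]
    rw [← Finset.mul_sum]
  have hMGF : ∫⁻ q, f q ∂P ≤ ENNReal.ofReal (D ^ r) := by
    have h1 : ∑ s : Fin m → Bool, ∫⁻ ω, f (s, ω) ∂(M s)
        ≤ ∑ s : Fin m → Bool, ∫⁻ ω, ∏ i, ψ i ω ∂(M s) := by
      have h0 := hmain Finset.univ
      simp only [Finset.compl_univ, Finset.prod_empty, mul_one] at h0
      refine le_trans (le_of_eq ?_) h0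
      refine Finset.sum_congr rfl fun s _ => ?_
      refine lintegral_congr fun ω => ?_
      exact hfφ s ω
    have h2 : ∑ s : Fin m → Bool, ∫⁻ ω, ∏ i, ψ i ω ∂(M s)
        = (2:ℝ≥0∞)^m * ENNReal.ofReal (D ^ r) := by
      simp_rw [hpsiprod]
      rw [Finset.sum_const, Finset.card_univ, Fintype.card_fun, Fintype.card_fin,
        Fintype.card_bool, nsmul_eq_mul]
      push_cast
      ring
    rw [hPint]
    calc ((2:ℝ≥0∞)^m)⁻¹ * ∑ s : Fin m → Bool, ∫⁻ ω, f (s, ω) ∂(M s)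
        ≤ ((2:ℝ≥0∞)^m)⁻¹ * ((2:ℝ≥0∞)^m * ENNReal.ofReal (D ^ r)) := by
          rw [← h2]; exact mul_le_mul_right h1 _
      _ = ENNReal.ofReal (D ^ r) := by
          rw [← mul_assoc, ENNReal.inv_mul_cancel (by positivity) (by simp), one_mul]
  -- Markov / Chernoff step
  set x0 : ℝ := L * ((r:ℝ) * p + t) with hx0def
  set ec : ℝ≥0∞ := ENNReal.ofReal (Real.exp x0) with hecdef
  have hec0 : ec ≠ 0 := by
    rw [hecdef]
    simp [ENNReal.ofReal_pos, Real.exp_pos]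
  have hectop : ec ≠ ⊤ := by rw [hecdef]; exact ENNReal.ofReal_ne_top
  have hsub : {q : (Fin m → Bool) × Ω |
        (r : ℝ) * p + t ≤ ((∑ i, max 0 (Sg q.2 i * signOf (q.1 i)) : ℤ) : ℝ)}
      ⊆ {q | ec ≤ f q} := by
    intro q hq'
    simp only [Set.mem_setOf_eq] at hq' ⊢
    rw [hecdef, hfdef]
    exact ENNReal.ofReal_le_ofReal (Real.exp_le_exp.mpr
      (mul_le_mul_of_nonneg_left hq' hL.le))
  have hmark : P {q | ec ≤ f q} ≤ ec⁻¹ * ∫⁻ q, f q ∂P := by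
    rw [← one_mul (P _), ← ENNReal.inv_mul_cancel hec0 hectop, mul_assoc]
    exact mul_le_mul_right (mul_meas_ge_le_lintegral₀ hmf.aemeasurable ec) _
  have hfinal : ec⁻¹ * ENNReal.ofReal (D ^ r) ≤ ENNReal.ofReal (Real.exp (-2 * t ^ 2 / r)) := by
    have hinveq : ec⁻¹ = ENNReal.ofReal (Real.exp (-x0)) := by
      rw [hecdef, Real.exp_neg, ENNReal.ofReal_inv_of_pos (Real.exp_pos x0)]
    rw [hinveq, ← ENNReal.ofReal_mul (Real.exp_nonneg _)]
    apply ENNReal.ofReal_le_ofReal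
    have h1 : D ^ r ≤ Real.exp (p * L + L ^ 2 / 8) ^ r :=
      pow_le_pow_left₀ hD0.le (hoef_scalar p hp0 hp1 L hL.le) r
    have h2 : Real.exp (p * L + L ^ 2 / 8) ^ r = Real.exp ((r:ℝ) * (p * L + L ^ 2 / 8)) := by
      rw [Real.exp_nat_mul]
    calc Real.exp (-x0) * D ^ r
        ≤ Real.exp (-x0) * Real.exp ((r:ℝ) * (p * L + L ^ 2 / 8)) := by
          rw [← h2]; exact mul_le_mul_of_nonneg_left h1 (Real.exp_nonneg _)
      _ = Real.exp (-x0 + (r:ℝ) * (p * L + L ^ 2 / 8)) := (Real.exp_add _ _).symm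
      _ = Real.exp (-2 * t ^ 2 / r) := by
          congr 1
          rw [hx0def, hLdef]
          field_simp
          ring
  calc P {q : (Fin m → Bool) × Ω |
        (r : ℝ) * p + t ≤ ((∑ i, max 0 (Sg q.2 i * signOf (q.1 i)) : ℤ) : ℝ)}
      ≤ P {q | ec ≤ f q} := measure_mono hsub
    _ ≤ ec⁻¹ * ∫⁻ q, f q ∂P := hmark
    _ ≤ ec⁻¹ * ENNReal.ofReal (D ^ r) := mul_le_mul_right hMGF _
    _ ≤ ENNReal.ofReal (Real.exp (-2 * t ^ 2 / r)) := hfinal
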